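/- Let X be a Banach space and q > 2, and suppose ℓ_q embeds isomorphically into X. Then it is false that every bounded operator from ℓ∞ (equivalently from c₀ or a C(K) space) to X is 2-summing; i.e. Π₂(ℓ∞, X) ≠ B(ℓ∞, X). -/

import Mathlib

open scoped BigOperators
noncomputable section

/-- `sup { (∑ |ξ(xᵢ)|^p)^{1/p} : ξ ∈ X*, ‖ξ‖ ≤ 1 }`. -/
def weakLpNorm (p : ℝ) {X : Type*} [NormedAddCommGroup X] [NormedSpace ℝ X]
    {n : ℕ} (x : Fin n → X) : ℝ :=
  ⨆ ξ : {ξ : X →L[ℝ] ℝ // ‖ξ‖ ≤ 1}, (∑ i, |ξ.1 (x i)| ^ p) ^ (1/p)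

/-- `u` is `(q,p)`-summing with constant `C`. -/
def IsQPSummingWith (q p : ℝ) {X Y : Type*} [NormedAddCommGroup X] [NormedSpace ℝ X]
    [NormedAddCommGroup Y] [NormedSpace ℝ Y] (u : X →L[ℝ] Y) (C : ℝ) : Prop :=
  ∀ (n : ℕ) (x : Fin n → X), (∑ i, ‖u (x i)‖ ^ q) ^ (1/q) ≤ C * weakLpNorm p x

/-- The `(q,p)`-summing norm `π_{q,p}(u)`. -/
def piQP (q p : ℝ) {X Y : Type*} [NormedAddCommGroup X] [NormedSpace ℝ X]
    [NormedAddCommGroup Y] [NormedSpace ℝ Y] (u : X →L[ℝ] Y) : ℝ :=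
  sInf {C | 0 ≤ C ∧ IsQPSummingWith q p u C}

/-- A bounded operator has finite rank if its range is finite dimensional. -/
def FiniteRank {X Y : Type*} [NormedAddCommGroup X] [NormedSpace ℝ X]
    [NormedAddCommGroup Y] [NormedSpace ℝ Y] (u : X →L[ℝ] Y) : Prop :=
  FiniteDimensional ℝ (LinearMap.range (u : X →ₗ[ℝ] Y))

/-- Property (P): every finite rank operator factors as a norm-convergent sum
`u = ∑ vₙ ∘ wₙ` of products of finite rank operators with `∑ ‖vₙ‖‖wₙ‖ ≤ C‖u‖`. -/
def PropertyP (X : Type*) [NormedAddCommGroup X] [NormedSpace ℝ X] : Prop :=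
  ∃ C : ℝ, ∀ u : X →L[ℝ] X, FiniteRank u →
    ∃ v w : ℕ → X →L[ℝ] X, (∀ n, FiniteRank (v n)) ∧ (∀ n, FiniteRank (w n)) ∧
      HasSum (fun n => (v n).comp (w n)) u ∧
      Summable (fun n => ‖v n‖ * ‖w n‖) ∧
      ∑' n, ‖v n‖ * ‖w n‖ ≤ C * ‖u‖

/-- The Rademacher functions on `[0,1]`. -/
def rademacher (n : ℕ) (t : ℝ) : ℝ := (-1 : ℝ) ^ ⌊(2 : ℝ) ^ (n + 1) * t⌋

/-- `X` has cotype `q` with constant `C`. -/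
def HasCotypeWith (q : ℝ) (X : Type*) [NormedAddCommGroup X] [NormedSpace ℝ X]
    (C : ℝ) : Prop :=
  ∀ (n : ℕ) (x : Fin n → X),
    (∑ i, ‖x i‖ ^ q) ^ (1/q) ≤
      C * (∫ t in (0:ℝ)..1, ‖∑ i, rademacher i.1 t • x i‖ ^ 2) ^ (1/(2:ℝ))

namespace AuxS7

/-- The sequence `a n = (n+1)^{-1/2}`. -/
def aseq (n : ℕ) : ℝ := ((n : ℝ) + 1) ^ (-(1/2) : ℝ)

lemma aseq_pos (n : ℕ) : 0 < aseq n :=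
  Real.rpow_pos_of_pos (by positivity) _

lemma aseq_sq (n : ℕ) : aseq n ^ 2 = ((n : ℝ) + 1)⁻¹ := by
  have h : (0:ℝ) ≤ (n : ℝ) + 1 := by positivity
  rw [aseq, ← Real.rpow_natCast (((n : ℝ) + 1) ^ (-(1/2) : ℝ)) 2, ← Real.rpow_mul h]
  norm_num [Real.rpow_neg_one]

lemma aseq_summable {q : ℝ} (hq : 2 < q) : Summable (fun n => aseq n ^ q) := by
  have h1 : Summable (fun n : ℕ => ((n : ℝ)) ^ (-(q/2))) := by
    rw [Real.summable_nat_rpow]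
    linarith
  have h2 : Summable (fun n : ℕ => (((n+1 : ℕ) : ℝ)) ^ (-(q/2))) :=
    (summable_nat_add_iff 1).2 h1
  refine h2.congr fun n => ?_
  push_cast
  rw [aseq, ← Real.rpow_mul (by positivity)]
  ring_nf

end AuxS7

namespace AuxS7

variable {q : ℝ}

lemma memdiag (hq : 2 < q) (x : lp (fun _ : ℕ => ℝ) ⊤) :
    Memℓp (fun n => aseq n * x n) (ENNReal.ofReal q) := by
  have hq0 : (0:ℝ) < q := by linarith
  have htr : (ENNReal.ofReal q).toReal = q := ENNReal.toReal_ofReal hq0.le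
  apply memℓp_gen
  rw [htr]
  have hb : Summable (fun n => aseq n ^ q * ‖x‖ ^ q) := (aseq_summable hq).mul_right _
  refine Summable.of_nonneg_of_le (fun n => Real.rpow_nonneg (norm_nonneg _) q) (fun n => ?_) hb
  have h1 : ‖aseq n * x n‖ ≤ aseq n * ‖x‖ := by
    rw [norm_mul, Real.norm_of_nonneg (aseq_pos n).le]
    exact mul_le_mul_of_nonneg_left (lp.norm_apply_le_norm ENNReal.top_ne_zero x n)
      (aseq_pos n).le
  calc ‖aseq n * x n‖ ^ q ≤ (aseq n * ‖x‖) ^ q :=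
        Real.rpow_le_rpow (norm_nonneg _) h1 hq0.le
    _ = aseq n ^ q * ‖x‖ ^ q :=
        Real.mul_rpow (aseq_pos n).le (norm_nonneg _)

end AuxS7

namespace AuxS7

/-- diagonal operator as a linear map -/
def diagL (hq : 2 < q) : lp (fun _ : ℕ => ℝ) ⊤ →ₗ[ℝ] lp (fun _ : ℕ => ℝ) (ENNReal.ofReal q) where
  toFun x := ⟨fun n => aseq n * x n, memdiag hq x⟩
  map_add' x y := by
    apply lp.ext
    funext n
    simp only [lp.coeFn_add, Pi.add_apply]
    ring
  map_smul' c x := by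
    apply lp.ext
    funext n
    simp only [lp.coeFn_smul, Pi.smul_apply, RingHom.id_apply, smul_eq_mul]
    ring

lemma diagL_apply (hq : 2 < q) (x : lp (fun _ : ℕ => ℝ) ⊤) (n : ℕ) :
    (diagL hq x : ℕ → ℝ) n = aseq n * x n := rfl

variable [Fact (1 ≤ ENNReal.ofReal q)]

lemma diagL_bound (hq : 2 < q) (x : lp (fun _ : ℕ => ℝ) ⊤) :
    ‖diagL hq x‖ ≤ ((∑' n, aseq n ^ q) ^ (1/q)) * ‖x‖ := by
  have hq0 : (0:ℝ) < q := by linarith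
  have htr : (ENNReal.ofReal q).toReal = q := ENNReal.toReal_ofReal hq0.le
  have hSnn : (0:ℝ) ≤ ∑' n, aseq n ^ q := tsum_nonneg fun n => Real.rpow_nonneg (aseq_pos n).le q
  have hCnn : (0:ℝ) ≤ ((∑' n, aseq n ^ q) ^ (1/q)) * ‖x‖ :=
    mul_nonneg (Real.rpow_nonneg hSnn _) (norm_nonneg _)
  refine lp.norm_le_of_forall_sum_le (by rw [htr]; exact hq0) hCnn fun s => ?_
  rw [htr]
  have key : ∀ n, ‖(diagL hq x : ℕ → ℝ) n‖ ^ q ≤ aseq n ^ q * ‖x‖ ^ q := by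
    intro n
    rw [diagL_apply]
    have h1 : ‖aseq n * x n‖ ≤ aseq n * ‖x‖ := by
      rw [norm_mul, Real.norm_of_nonneg (aseq_pos n).le]
      exact mul_le_mul_of_nonneg_left (lp.norm_apply_le_norm ENNReal.top_ne_zero x n)
        (aseq_pos n).le
    calc ‖aseq n * x n‖ ^ q ≤ (aseq n * ‖x‖) ^ q :=
          Real.rpow_le_rpow (norm_nonneg _) h1 hq0.le
      _ = aseq n ^ q * ‖x‖ ^ q := Real.mul_rpow (aseq_pos n).le (norm_nonneg _)
  calc ∑ n ∈ s, ‖(diagL hq x : ℕ → ℝ) n‖ ^ q ≤ ∑ n ∈ s, aseq n ^ q * ‖x‖ ^ q :=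
        Finset.sum_le_sum fun n _ => key n
    _ = (∑ n ∈ s, aseq n ^ q) * ‖x‖ ^ q := by rw [Finset.sum_mul]
    _ ≤ (∑' n, aseq n ^ q) * ‖x‖ ^ q := by
        apply mul_le_mul_of_nonneg_right _ (Real.rpow_nonneg (norm_nonneg x) q)
        exact (aseq_summable hq).sum_le_tsum s (fun n _ => Real.rpow_nonneg (aseq_pos n).le q)
    _ = (((∑' n, aseq n ^ q) ^ (1/q)) * ‖x‖) ^ q := by
        rw [Real.mul_rpow (by positivity) (norm_nonneg _), ← Real.rpow_mul hSnn]
        rw [one_div, inv_mul_cancel₀ hq0.ne', Real.rpow_one]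

/-- the diagonal operator -/
def diag (hq : 2 < q) : lp (fun _ : ℕ => ℝ) ⊤ →L[ℝ] lp (fun _ : ℕ => ℝ) (ENNReal.ofReal q) :=
  LinearMap.mkContinuous (diagL hq) _ (diagL_bound hq)

lemma diag_apply (hq : 2 < q) (x : lp (fun _ : ℕ => ℝ) ⊤) (n : ℕ) :
    (diag hq x : ℕ → ℝ) n = aseq n * x n := rfl

end AuxS7

namespace AuxS7

def ebasis (n : ℕ) (i : Fin n) : lp (fun _ : ℕ => ℝ) ⊤ := lp.single ⊤ (i : ℕ) (1:ℝ)

lemma sum_abs_le (n : ℕ) (ξ : lp (fun _ : ℕ => ℝ) ⊤ →L[ℝ] ℝ) (hξ : ‖ξ‖ ≤ 1) :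
    ∑ i : Fin n, |ξ (ebasis n i)| ≤ 1 := by
  set ε : Fin n → ℝ := fun i => if 0 ≤ ξ (ebasis n i) then 1 else -1 with hε
  have hεabs : ∀ i, |ε i| = 1 := by
    intro i
    by_cases h : 0 ≤ ξ (ebasis n i) <;> simp [hε, h]
  set s : lp (fun _ : ℕ => ℝ) ⊤ := ∑ i : Fin n, ε i • ebasis n i with hs
  have hcoord : ∀ k : ℕ, (s : ℕ → ℝ) k = ∑ i : Fin n, ε i * (ebasis n i : ℕ → ℝ) k := by
    intro k
    rw [hs, lp.coeFn_sum, Finset.sum_apply]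
    simp [lp.coeFn_smul]
  have hnorm : ‖s‖ ≤ 1 := by
    refine lp.norm_le_of_forall_le zero_le_one fun k => ?_
    rw [Real.norm_eq_abs, hcoord]
    by_cases hk : k < n
    · rw [Finset.sum_eq_single (⟨k, hk⟩ : Fin n)]
      · rw [ebasis, lp.single_apply_self, mul_one]
        exact le_of_eq (hεabs _)
      · intro i _ hne
        rw [ebasis, lp.single_apply_ne, mul_zero]
        intro hki
        exact hne (Fin.ext hki.symm)
      · intro habs
        exact absurd (Finset.mem_univ _) habs
    · rw [Finset.sum_eq_zero]
      · simp
      · intro i _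
        rw [ebasis, lp.single_apply_ne, mul_zero]
        intro hki
        exact hk (hki ▸ i.isLt)
  have hξs : ξ s = ∑ i : Fin n, |ξ (ebasis n i)| := by
    rw [hs, map_sum]
    refine Finset.sum_congr rfl fun i _ => ?_
    rw [map_smul, smul_eq_mul]
    by_cases h : 0 ≤ ξ (ebasis n i)
    · rw [hε]; simp [h, abs_of_nonneg h]
    · rw [hε]; simp [h, abs_of_neg (lt_of_not_ge h)]
  calc ∑ i : Fin n, |ξ (ebasis n i)| = ξ s := hξs.symm
    _ ≤ |ξ s| := le_abs_self _
    _ ≤ ‖ξ‖ * ‖s‖ := ξ.le_opNorm s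
    _ ≤ 1 * 1 := mul_le_mul hξ hnorm (norm_nonneg _) zero_le_one
    _ = 1 := one_mul 1

end AuxS7

namespace AuxS7

lemma rpow_two' (t : ℝ) : t ^ (2:ℝ) = t ^ 2 := by
  rw [show (2:ℝ) = ((2:ℕ):ℝ) by norm_num, Real.rpow_natCast]

lemma weak_ebasis_le (n : ℕ) : weakLpNorm 2 (ebasis n) ≤ 1 := by
  refine Real.iSup_le (fun ξ => ?_) zero_le_one
  refine Real.rpow_le_one (Finset.sum_nonneg fun i _ =>
    Real.rpow_nonneg (abs_nonneg _) _) ?_ (by norm_num)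
  have habs := sum_abs_le n ξ.1 ξ.2
  have hsq : ∑ i : Fin n, |ξ.1 (ebasis n i)| ^ (2:ℝ)
      = ∑ i : Fin n, |ξ.1 (ebasis n i)| ^ 2 :=
    Finset.sum_congr rfl fun i _ => rpow_two' _
  rw [hsq]
  have h2 : ∑ i : Fin n, |ξ.1 (ebasis n i)| ^ 2
      ≤ (∑ i : Fin n, |ξ.1 (ebasis n i)|) ^ 2 := by
    calc ∑ i : Fin n, |ξ.1 (ebasis n i)| ^ 2
        ≤ ∑ i : Fin n, |ξ.1 (ebasis n i)| * (∑ i' : Fin n, |ξ.1 (ebasis n i')|) := by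
          refine Finset.sum_le_sum fun i _ => ?_
          rw [sq]
          exact mul_le_mul_of_nonneg_left
            (Finset.single_le_sum (f := fun i' : Fin n => |ξ.1 (ebasis n i')|) (fun i' _ => abs_nonneg _) (Finset.mem_univ i))
            (abs_nonneg _)
      _ = (∑ i : Fin n, |ξ.1 (ebasis n i)|) ^ 2 := by rw [← Finset.sum_mul, sq]
  have h3 : (∑ i : Fin n, |ξ.1 (ebasis n i)|) ^ 2 ≤ 1 := by
    have hnn : (0:ℝ) ≤ ∑ i : Fin n, |ξ.1 (ebasis n i)| :=
      Finset.sum_nonneg fun i _ => abs_nonneg _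
    nlinarith
  linarith

end AuxS7

namespace AuxS7

lemma diag_ebasis {q : ℝ} (hq : 2 < q) [Fact (1 ≤ ENNReal.ofReal q)]
    (n : ℕ) (i : Fin n) :
    diag hq (ebasis n i) = lp.single (ENNReal.ofReal q) (i : ℕ) (aseq i) := by
  apply lp.ext
  funext k
  rw [diag_apply]
  by_cases h : k = (i : ℕ)
  · subst h
    rw [ebasis, lp.single_apply_self, lp.single_apply_self, mul_one]
  · rw [ebasis, lp.single_apply_ne _ _ _ h, lp.single_apply_ne _ _ _ h, mul_zero]

lemma norm_diag_ebasis {q : ℝ} (hq : 2 < q) [Fact (1 ≤ ENNReal.ofReal q)]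
    (n : ℕ) (i : Fin n) : ‖diag hq (ebasis n i)‖ = aseq i := by
  have hq0 : (0:ℝ) < q := by linarith
  have htr : 0 < (ENNReal.ofReal q).toReal := by
    rw [ENNReal.toReal_ofReal hq0.le]; exact hq0
  rw [diag_ebasis hq n i,
    lp.norm_single (E := fun _ : ℕ => ℝ) (ENNReal.ofReal_pos.mpr hq0) (i : ℕ) (aseq i),
    Real.norm_of_nonneg (aseq_pos _).le]

end AuxS7


/-- if `ℓ_q` (q > 2) embeds isomorphically into `X` then not every
bounded operator `ℓ∞ → X` is 2-summing. -/
theorem not_all_two_summing_of_lq_embeds (X : Type*) [NormedAddCommGroup X]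
    [NormedSpace ℝ X] (q : ℝ) (hq : 2 < q) [Fact (1 ≤ ENNReal.ofReal q)]
    (hembed : ∃ j : lp (fun _ : ℕ => ℝ) (ENNReal.ofReal q) →L[ℝ] X,
      ∃ c > (0:ℝ), ∀ x, c * ‖x‖ ≤ ‖j x‖) :
    ¬ ∀ u : lp (fun _ : ℕ => ℝ) ⊤ →L[ℝ] X, ∃ C, 0 ≤ C ∧ IsQPSummingWith 2 2 u C := by
  intro h
  obtain ⟨j, c, hc, hj⟩ := hembed
  obtain ⟨C, hC0, hC⟩ := h (j.comp (AuxS7.diag hq))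
  -- for each n, the harmonic sum is bounded
  have key : ∀ n : ℕ, c ^ 2 * ∑ i ∈ Finset.range n, ((i : ℝ) + 1)⁻¹ ≤ C ^ 2 := by
    intro n
    set u := j.comp (AuxS7.diag hq) with hu
    set S : ℝ := ∑ i : Fin n, ‖u (AuxS7.ebasis n i)‖ ^ (2:ℝ) with hS
    have hSnn : 0 ≤ S :=
      Finset.sum_nonneg fun i _ => Real.rpow_nonneg (norm_nonneg _) _
    have h1 : S ^ (1/(2:ℝ)) ≤ C := by
      calc S ^ (1/(2:ℝ)) ≤ C * weakLpNorm 2 (AuxS7.ebasis n) := hC n (AuxS7.ebasis n)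
        _ ≤ C * 1 := mul_le_mul_of_nonneg_left (AuxS7.weak_ebasis_le n) hC0
        _ = C := mul_one C
    have h2 : S ≤ C ^ 2 := by
      have : S = (S ^ (1/(2:ℝ))) ^ 2 := by
        rw [← AuxS7.rpow_two' (S ^ (1/(2:ℝ))), ← Real.rpow_mul hSnn]
        norm_num
      rw [this]
      exact pow_le_pow_left₀ (Real.rpow_nonneg hSnn _) h1 2
    have h3 : ∑ i : Fin n, c ^ 2 * ((i : ℝ) + 1)⁻¹ ≤ S := by
      refine Finset.sum_le_sum fun i _ => ?_
      have hlow : c * AuxS7.aseq i ≤ ‖u (AuxS7.ebasis n i)‖ := by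
        have := hj (AuxS7.diag hq (AuxS7.ebasis n i))
        rwa [AuxS7.norm_diag_ebasis hq n i] at this
      have hnn : 0 ≤ c * AuxS7.aseq i := mul_nonneg hc.le (AuxS7.aseq_pos _).le
      calc c ^ 2 * ((i : ℝ) + 1)⁻¹ = (c * AuxS7.aseq i) ^ 2 := by
            rw [mul_pow, AuxS7.aseq_sq]
        _ ≤ ‖u (AuxS7.ebasis n i)‖ ^ 2 := pow_le_pow_left₀ hnn hlow 2
        _ = ‖u (AuxS7.ebasis n i)‖ ^ (2:ℝ) := (AuxS7.rpow_two' _).symm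
    calc c ^ 2 * ∑ i ∈ Finset.range n, ((i : ℝ) + 1)⁻¹
        = ∑ i : Fin n, c ^ 2 * ((i : ℝ) + 1)⁻¹ := by
          rw [Finset.mul_sum, Fin.sum_univ_eq_sum_range (fun i => c ^ 2 * ((i : ℝ) + 1)⁻¹)]
      _ ≤ S := h3
      _ ≤ C ^ 2 := h2
  -- but the harmonic series diverges
  have hdiv : Filter.Tendsto (fun n => ∑ i ∈ Finset.range n, ((i : ℝ) + 1)⁻¹)
      Filter.atTop Filter.atTop := by
    have := Real.tendsto_sum_range_one_div_nat_succ_atTop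
    refine this.congr fun n => Finset.sum_congr rfl fun i _ => ?_
    rw [one_div]
  obtain ⟨n, hn⟩ := (hdiv.eventually_gt_atTop (C ^ 2 / c ^ 2)).exists
  have hc2 : (0:ℝ) < c ^ 2 := by positivity
  have := key n
  rw [div_lt_iff₀ hc2] at hn
  nlinarith
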